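/- Let g be convex differentiable with L-Lipschitz gradient, h convex, A linear, b a vector, θ ∈ (0,1], β > 0, λ^k, and points x^k, z^k, y^{k+1} = (1−θ)x^k + θ z^k. Let z^{k+1} minimize ⟨∇g(y^{k+1}), x⟩ + h(x) + ⟨λ^k, A x⟩ + (β/2)‖A x − b‖² + (Lθ/2)‖x − z^k‖², set x^{k+1} = (1−θ)x^k + θ z^{k+1} and λ^{k+1} = λ^k + β(A z^{k+1} − b). Then for f = g + h and any x: f(x^{k+1}) − f(x) − θ⟨Aᵀλ^{k+1}, x − z^{k+1}⟩ ≤ (1−θ)(f(x^k) − f(x)) + (Lθ²/2)(‖z^k − x‖² − ‖z^{k+1} − x‖²). -/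

import Mathlib

open scoped RealInnerProductSpace

section aux
variable {F : Type*} [NormedAddCommGroup F] [InnerProductSpace ℝ F] [CompleteSpace F]
set_option linter.unusedSectionVars false

lemma line_hasDerivAt (v w : F) (t : ℝ) :
    HasDerivAt (fun s : ℝ => v + s • w) w t := by
  simpa using ((hasDerivAt_id t).smul_const w).const_add v

lemma comp_line_hasDerivAt {g : F → ℝ} {gv : F} (v w : F) (t : ℝ)
    (hgv : HasGradientAt g gv (v + t • w)) :
    HasDerivAt (fun s : ℝ => g (v + s • w)) ⟪gv, w⟫ t := by
  have := hgv.hasFDerivAt.comp_hasDerivAt t (line_hasDerivAt v w t)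
  simp at this
  exact this

lemma grad_convex_le {g : F → ℝ} (hg : ConvexOn ℝ Set.univ g) {v gv : F}
    (hgv : HasGradientAt g gv v) (u : F) : g v + ⟪gv, u - v⟫ ≤ g u := by
  have hφ : ConvexOn ℝ Set.univ (fun t : ℝ => g (v + t • (u - v))) := by
    have := hg.comp_affineMap (AffineMap.lineMap v u : ℝ →ᵃ[ℝ] F)
    simp only [Set.preimage_univ] at this
    have e : (fun t : ℝ => g (v + t • (u - v))) = g ∘ AffineMap.lineMap v u := by
      funext t
      simp [AffineMap.lineMap_apply, add_comm]
    rw [e]; exact this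
  have hd : HasDerivAt (fun t : ℝ => g (v + t • (u - v))) ⟪gv, u - v⟫ 0 :=
    comp_line_hasDerivAt v (u - v) 0 (by simpa using hgv)
  have := hφ.le_slope_of_hasDerivAt (Set.mem_univ (0:ℝ)) (Set.mem_univ (1:ℝ))
    one_pos hd
  rw [slope_def_field] at this
  simp only [one_smul, zero_smul, add_zero] at this
  have h1 : v + (u - v) = u := by abel
  rw [h1] at this
  linarith

lemma convexOn_of_grad_mono {q : F → ℝ} {q' : F → F}
    (hq : ∀ x, HasGradientAt q (q' x) x)
    (hmono : ∀ a c, 0 ≤ ⟪q' a - q' c, a - c⟫) : ConvexOn ℝ Set.univ q := by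
  refine ⟨convex_univ, fun x _ y _ a c ha hc hac => ?_⟩
  set w := y - x with hw
  have hline : ∀ s : ℝ, HasDerivAt (fun s : ℝ => q (x + s • w)) ⟪q' (x + s • w), w⟫ s :=
    fun s => comp_line_hasDerivAt x w s (hq _)
  have hψ : ConvexOn ℝ Set.univ (fun s : ℝ => q (x + s • w)) := by
    apply Monotone.convexOn_univ_of_deriv
    · exact fun s => ((hline s).differentiableAt)
    · intro s t hst
      rw [(hline s).deriv, (hline t).deriv]
      rcases eq_or_lt_of_le hst with rfl | hlt
      · exact le_rfl
      · have key := hmono (x + t • w) (x + s • w)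
        have he : (x + t • w) - (x + s • w) = (t - s) • w := by module
        rw [he, real_inner_smul_right, inner_sub_left] at key
        nlinarith [sub_pos.mpr hlt]
  have := hψ.2 (Set.mem_univ (0:ℝ)) (Set.mem_univ (1:ℝ)) ha hc hac
  simp only [smul_eq_mul, mul_zero, mul_one, zero_add] at this
  have e0 : x + (0:ℝ) • w = x := by simp
  have e1 : x + (1:ℝ) • w = y := by simp [hw]
  have ec : x + c • w = a • x + c • y := by
    rw [hw, smul_sub]
    have : a = 1 - c := by linarith
    rw [this]; module
  rw [e0, e1, ec] at this
  simpa using this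

lemma descent_lemma {g : F → ℝ} {g' : F → F} {L : ℝ} (hL : 0 ≤ L)
    (hgrad : ∀ x, HasGradientAt g (g' x) x)
    (hlip : ∀ x y, ‖g' x - g' y‖ ≤ L * ‖x - y‖) (u v : F) :
    g u ≤ g v + ⟪g' v, u - v⟫ + L / 2 * ‖u - v‖ ^ 2 := by
  set q : F → ℝ := fun x => L / 2 * ‖x‖ ^ 2 - g x with hqdef
  have hq : ∀ x, HasGradientAt q ((L : ℝ) • x - g' x) x := by
    intro x
    rw [hasGradientAt_iff_hasFDerivAt]
    have h1 : HasFDerivAt (fun x : F => ‖x‖ ^ 2) (2 • (innerSL ℝ x)) x :=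
      (hasFDerivAt_id x).norm_sq
    have h2 := ((h1.const_smul (L / 2)).sub (hgrad x).hasFDerivAt)
    refine HasFDerivAt.congr_fderiv (f := q) h2 ?_
    ext w
    simp [InnerProductSpace.toDual_apply_apply, inner_sub_left, real_inner_smul_left,
      innerSL_apply_apply]
    ring
  have hmono : ∀ a c, 0 ≤ ⟪((L : ℝ) • a - g' a) - ((L : ℝ) • c - g' c), a - c⟫ := by
    intro a c
    have h1 : ⟪((L : ℝ) • a - g' a) - ((L : ℝ) • c - g' c), a - c⟫
        = L * ‖a - c‖ ^ 2 - ⟪g' a - g' c, a - c⟫ := by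
      have : ((L : ℝ) • a - g' a) - ((L : ℝ) • c - g' c)
          = L • (a - c) - (g' a - g' c) := by module
      rw [this, inner_sub_left, real_inner_smul_left, real_inner_self_eq_norm_sq]
    have h2 : ⟪g' a - g' c, a - c⟫ ≤ L * ‖a - c‖ ^ 2 := by
      calc ⟪g' a - g' c, a - c⟫ ≤ ‖g' a - g' c‖ * ‖a - c‖ := real_inner_le_norm _ _
        _ ≤ L * ‖a - c‖ * ‖a - c‖ :=
          mul_le_mul_of_nonneg_right (hlip a c) (norm_nonneg _)
        _ = L * ‖a - c‖ ^ 2 := by ring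
    linarith
  have hqconv : ConvexOn ℝ Set.univ q := convexOn_of_grad_mono hq hmono
  have := grad_convex_le hqconv (hq v) u
  simp only [hqdef] at this
  rw [inner_sub_left, real_inner_smul_left] at this
  have hexp : ‖u‖ ^ 2 = ‖v‖ ^ 2 + 2 * ⟪v, u - v⟫ + ‖u - v‖ ^ 2 := by
    have := norm_add_sq_real v (u - v)
    simp only [add_sub_cancel] at this
    linarith
  nlinarith

end aux

set_option maxHeartbeats 1000000 in
theorem fast_palm_one_step (m p : ℕ)
    (g h : EuclideanSpace ℝ (Fin m) → ℝ)
    (g' : EuclideanSpace ℝ (Fin m) → EuclideanSpace ℝ (Fin m)) (L : ℝ) (hL : 0 ≤ L)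
    (hgconv : ConvexOn ℝ Set.univ g) (hhconv : ConvexOn ℝ Set.univ h)
    (hgrad : ∀ x, HasGradientAt g (g' x) x)
    (hlip : ∀ x y, ‖g' x - g' y‖ ≤ L * ‖x - y‖)
    (A : EuclideanSpace ℝ (Fin m) →L[ℝ] EuclideanSpace ℝ (Fin p))
    (b : EuclideanSpace ℝ (Fin p))
    (θ : ℝ) (hθ : θ ∈ Set.Ioc (0 : ℝ) 1) (β : ℝ) (hβ : 0 < β)
    (lamk lamk1 : EuclideanSpace ℝ (Fin p))
    (xk zk yk1 zk1 xk1 : EuclideanSpace ℝ (Fin m))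
    (hy : yk1 = (1 - θ) • xk + θ • zk)
    (hz : ∀ u : EuclideanSpace ℝ (Fin m),
      ⟪g' yk1, zk1⟫ + h zk1 + ⟪lamk, A zk1⟫ + β / 2 * ‖A zk1 - b‖ ^ 2 +
        L * θ / 2 * ‖zk1 - zk‖ ^ 2 ≤
      ⟪g' yk1, u⟫ + h u + ⟪lamk, A u⟫ + β / 2 * ‖A u - b‖ ^ 2 +
        L * θ / 2 * ‖u - zk‖ ^ 2)
    (hx : xk1 = (1 - θ) • xk + θ • zk1)
    (hlam : lamk1 = lamk + β • (A zk1 - b))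
    (x : EuclideanSpace ℝ (Fin m)) :
    (g xk1 + h xk1) - (g x + h x) - θ * ⟪ContinuousLinearMap.adjoint A lamk1, x - zk1⟫ ≤
      (1 - θ) * ((g xk + h xk) - (g x + h x)) +
        L * θ ^ 2 / 2 * (‖zk - x‖ ^ 2 - ‖zk1 - x‖ ^ 2) := by
  obtain ⟨hθ0, hθ1⟩ := hθ
  -- Step 1: key optimality inequality from hz via limiting argument
  set C : ℝ := ⟪g' yk1, x - zk1⟫ + (h x - h zk1) + ⟪lamk, A x - A zk1⟫ +
      β * ⟪A zk1 - b, A x - A zk1⟫ + L * θ * ⟪zk1 - zk, x - zk1⟫ with hC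
  set D : ℝ := β / 2 * ‖A x - A zk1‖ ^ 2 + L * θ / 2 * ‖x - zk1‖ ^ 2 with hD
  have hD0 : 0 ≤ D := by
    rw [hD]; positivity
  have hCt : ∀ t : ℝ, 0 < t → t ≤ 1 → 0 ≤ C + t * D := by
    intro t ht0 ht1'
    have hzt := hz (zk1 + t • (x - zk1))
    have e1 : ⟪g' yk1, zk1 + t • (x - zk1)⟫ = ⟪g' yk1, zk1⟫ + t * ⟪g' yk1, x - zk1⟫ := by
      rw [inner_add_right, real_inner_smul_right]
    have e2 : h (zk1 + t • (x - zk1)) ≤ (1 - t) * h zk1 + t * h x := by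
      have := hhconv.2 (Set.mem_univ zk1) (Set.mem_univ x) (by linarith : (0:ℝ) ≤ 1 - t)
        ht0.le (by ring)
      have he : (1 - t) • zk1 + t • x = zk1 + t • (x - zk1) := by module
      rw [he] at this
      simpa using this
    have e3 : ⟪lamk, A (zk1 + t • (x - zk1))⟫ = ⟪lamk, A zk1⟫ + t * ⟪lamk, A x - A zk1⟫ := by
      rw [map_add, map_smul, map_sub, inner_add_right, real_inner_smul_right]
    have eA : A (zk1 + t • (x - zk1)) - b = (A zk1 - b) + t • (A x - A zk1) := by
      rw [map_add, map_smul, map_sub]; abel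
    have e4 : ‖A (zk1 + t • (x - zk1)) - b‖ ^ 2 = ‖A zk1 - b‖ ^ 2 +
        2 * t * ⟪A zk1 - b, A x - A zk1⟫ + t ^ 2 * ‖A x - A zk1‖ ^ 2 := by
      rw [eA, norm_add_sq_real, real_inner_smul_right, norm_smul]
      simp [mul_pow, sq_abs]
      ring
    have eB : zk1 + t • (x - zk1) - zk = (zk1 - zk) + t • (x - zk1) := by abel
    have e5 : ‖zk1 + t • (x - zk1) - zk‖ ^ 2 = ‖zk1 - zk‖ ^ 2 +
        2 * t * ⟪zk1 - zk, x - zk1⟫ + t ^ 2 * ‖x - zk1‖ ^ 2 := by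
      rw [eB, norm_add_sq_real, real_inner_smul_right, norm_smul]
      simp [mul_pow, sq_abs]
      ring
    rw [e1, e3, e4, e5] at hzt
    have hmul : 0 ≤ t * (C + t * D) := by
      rw [hC, hD]
      linarith [e2, hzt]
    by_contra hneg
    push_neg at hneg
    nlinarith [mul_pos ht0 (neg_pos.mpr hneg)]
  have hC0 : 0 ≤ C := by
    refine le_of_forall_pos_le_add fun ε hε => ?_
    have hDε : (0:ℝ) < D + 1 := by linarith
    set t : ℝ := min 1 (ε / (D + 1)) with htdef
    have ht0 : 0 < t := lt_min one_pos (by positivity)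
    have ht1' : t ≤ 1 := min_le_left _ _
    have h1 := hCt t ht0 ht1'
    have h2 : t * D ≤ ε := by
      calc t * D ≤ (ε / (D + 1)) * D :=
            mul_le_mul_of_nonneg_right (min_le_right _ _) hD0
        _ ≤ ε := by
            rw [div_mul_eq_mul_div, div_le_iff₀ hDε]
            nlinarith
    linarith
  rw [hC] at hC0
  -- identities to interpret C
  have hT1 : ⟪ContinuousLinearMap.adjoint A lamk1, x - zk1⟫ =
      ⟪lamk, A x - A zk1⟫ + β * ⟪A zk1 - b, A x - A zk1⟫ := by
    rw [ContinuousLinearMap.adjoint_inner_left, map_sub, hlam, inner_add_left,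
      real_inner_smul_left]
  have hA3 : ⟪g' yk1, x - zk1⟫ = -⟪g' yk1, zk1 - x⟫ := by
    rw [show x - zk1 = -(zk1 - x) from by abel, inner_neg_right]
  have F5 : h zk1 ≤ h x - ⟪g' yk1, zk1 - x⟫ +
      ⟪ContinuousLinearMap.adjoint A lamk1, x - zk1⟫ +
      L * θ * ⟪zk1 - zk, x - zk1⟫ := by linarith [hC0, hT1, hA3]
  -- Step 2: descent lemma at xk1 around yk1
  have hv1 : xk1 - yk1 = (1 - θ) • (xk - yk1) + θ • (x - yk1) + θ • (zk1 - x) := by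
    rw [hx, hy]; module
  have hv2 : xk1 - yk1 = θ • (zk1 - zk) := by
    rw [hx, hy]; module
  have i1 : ⟪g' yk1, xk1 - yk1⟫ = (1 - θ) * ⟪g' yk1, xk - yk1⟫ +
      θ * ⟪g' yk1, x - yk1⟫ + θ * ⟪g' yk1, zk1 - x⟫ := by
    rw [hv1, inner_add_right, inner_add_right, real_inner_smul_right,
      real_inner_smul_right, real_inner_smul_right]
  have i2 : ‖xk1 - yk1‖ ^ 2 = θ ^ 2 * ‖zk1 - zk‖ ^ 2 := by
    rw [hv2, norm_smul]
    simp [mul_pow, sq_abs]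
  have F1 : g xk1 ≤ g yk1 + ((1 - θ) * ⟪g' yk1, xk - yk1⟫ +
      θ * ⟪g' yk1, x - yk1⟫ + θ * ⟪g' yk1, zk1 - x⟫) + L / 2 * (θ ^ 2 * ‖zk1 - zk‖ ^ 2) := by
    have := descent_lemma hL hgrad hlip xk1 yk1
    rw [i1, i2] at this
    exact this
  -- Step 3: convexity of g
  have F2 : g yk1 + ⟪g' yk1, x - yk1⟫ ≤ g x := grad_convex_le hgconv (hgrad yk1) x
  have F3 : g yk1 + ⟪g' yk1, xk - yk1⟫ ≤ g xk := grad_convex_le hgconv (hgrad yk1) xk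
  -- Step 4: convexity of h
  have F4 : h xk1 ≤ (1 - θ) * h xk + θ * h zk1 := by
    have := hhconv.2 (Set.mem_univ xk) (Set.mem_univ zk1) (by linarith : (0:ℝ) ≤ 1 - θ)
      hθ0.le (by ring)
    rw [← hx] at this
    simpa using this
  -- Step 5: three-point norm identity
  have F6 : ‖zk - x‖ ^ 2 = ‖zk1 - zk‖ ^ 2 + 2 * ⟪zk1 - zk, x - zk1⟫ + ‖zk1 - x‖ ^ 2 := by
    have hsum : zk - x = -(zk1 - zk) + (zk1 - x) := by abel
    have h3 : ⟪zk1 - zk, zk1 - x⟫ = -⟪zk1 - zk, x - zk1⟫ := by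
      rw [show zk1 - x = -(x - zk1) from by abel, inner_neg_right]
    rw [hsum, norm_add_sq_real, norm_neg, inner_neg_left, h3]
    ring
  -- Final assembly
  rw [F6]
  have m5 := mul_le_mul_of_nonneg_left F5 hθ0.le
  have m3 := mul_le_mul_of_nonneg_left F3 (by linarith : (0:ℝ) ≤ 1 - θ)
  have m2 := mul_le_mul_of_nonneg_left F2 hθ0.le
  nlinarith [F1, F4, m5, m3, m2]
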